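/- arXiv:2404.15065 — 2 statements merged into one kernel-verified Lean document; each statement's English description precedes it below -/
import Mathlib

section
/- Let M₁ and M₂ be matrix polynomial zonotopes with h₁ and h₂ generator matrices respectively, sharing the same identifier vector. Then their dependency-preserving matrix product M₃ = {M₁(α)·M₂(α) : α ∈ [-1,1]^p} is a matrix polynomial zonotope with at most h₁ + h₂ + h₁·h₂ generator matrices. -/
open scoped BigOperators

/-- A matrix polynomial zonotope with h generator matrices. -/
def MatPolyZono {n m p h : ℕ} (C : Matrix (Fin n) (Fin m) ℝ)
    (G : Fin h → Matrix (Fin n) (Fin m) ℝ) (E : Fin h → Fin p → ℕ) :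
    Set (Matrix (Fin n) (Fin m) ℝ) :=
  { M | ∃ α : Fin p → ℝ, (∀ k, α k ∈ Set.Icc (-1:ℝ) 1) ∧
      M = C + ∑ i, (∏ k, α k ^ E i k) • G i }

/-- The dependency-preserving product of two matrix polynomial zonotopes with
h₁ and h₂ generator matrices (shared identifier vector) is a matrix polynomial
zonotope with at most h₁ + h₂ + h₁·h₂ generator matrices. -/
theorem stmt_5 (n k m p h₁ h₂ : ℕ)
    (C₁ : Matrix (Fin n) (Fin k) ℝ) (G₁ : Fin h₁ → Matrix (Fin n) (Fin k) ℝ)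
    (E₁ : Fin h₁ → Fin p → ℕ)
    (C₂ : Matrix (Fin k) (Fin m) ℝ) (G₂ : Fin h₂ → Matrix (Fin k) (Fin m) ℝ)
    (E₂ : Fin h₂ → Fin p → ℕ) :
    ∃ (C : Matrix (Fin n) (Fin m) ℝ)
      (G : Fin (h₁ + h₂ + h₁ * h₂) → Matrix (Fin n) (Fin m) ℝ)
      (E : Fin (h₁ + h₂ + h₁ * h₂) → Fin p → ℕ),
      { M : Matrix (Fin n) (Fin m) ℝ | ∃ α : Fin p → ℝ,
          (∀ j, α j ∈ Set.Icc (-1:ℝ) 1) ∧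
          M = (C₁ + ∑ i, (∏ j, α j ^ E₁ i j) • G₁ i) *
              (C₂ + ∑ i, (∏ j, α j ^ E₂ i j) • G₂ i) }
      = MatPolyZono C G E := by
  classical
  set e : (Fin h₁ ⊕ Fin h₂) ⊕ (Fin h₁ × Fin h₂) ≃ Fin (h₁ + h₂ + h₁ * h₂) :=
    (Equiv.sumCongr finSumFinEquiv finProdFinEquiv).trans finSumFinEquiv with he
  refine ⟨C₁ * C₂,
    fun i => Sum.elim (Sum.elim (fun a => G₁ a * C₂) (fun b => C₁ * G₂ b))
      (fun ab => G₁ ab.1 * G₂ ab.2) (e.symm i),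
    fun i => Sum.elim (Sum.elim E₁ E₂)
      (fun ab j => E₁ ab.1 j + E₂ ab.2 j) (e.symm i), ?_⟩
  ext M
  simp only [MatPolyZono, Set.mem_setOf_eq]
  have key : ∀ α : Fin p → ℝ,
      (C₁ + ∑ i, (∏ j, α j ^ E₁ i j) • G₁ i) *
        (C₂ + ∑ i, (∏ j, α j ^ E₂ i j) • G₂ i)
      = C₁ * C₂ + ∑ i,
          (∏ j, α j ^ (Sum.elim (Sum.elim E₁ E₂)
            (fun ab j => E₁ ab.1 j + E₂ ab.2 j) (e.symm i)) j) •
          (Sum.elim (Sum.elim (fun a => G₁ a * C₂) (fun b => C₁ * G₂ b))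
            (fun ab => G₁ ab.1 * G₂ ab.2) (e.symm i)) := by
    intro α
    rw [Fintype.sum_equiv e.symm _ (fun s => (∏ j, α j ^ (Sum.elim (Sum.elim E₁ E₂)
            (fun ab j => E₁ ab.1 j + E₂ ab.2 j) s) j) •
          (Sum.elim (Sum.elim (fun a => G₁ a * C₂) (fun b => C₁ * G₂ b))
            (fun ab => G₁ ab.1 * G₂ ab.2) s)) (fun i => rfl)]
    rw [Fintype.sum_sum_type, Fintype.sum_sum_type]
    simp only [Sum.elim_inl, Sum.elim_inr]
    rw [Matrix.add_mul, Matrix.mul_add, Matrix.mul_add, Matrix.sum_mul, Matrix.mul_sum]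
    have : ∀ (a : Fin h₁) (b : Fin h₂),
        (∏ j, α j ^ E₁ a j) • G₁ a * ((∏ j, α j ^ E₂ b j) • G₂ b)
        = (∏ j, α j ^ (E₁ a j + E₂ b j)) • (G₁ a * G₂ b) := by
      intro a b
      rw [Matrix.smul_mul, Matrix.mul_smul, smul_smul, ← Finset.prod_mul_distrib]
      simp [pow_add]
    simp only [Matrix.mul_sum, Matrix.sum_mul, this, Matrix.smul_mul, Matrix.mul_smul,
      Fintype.sum_prod_type]
    have hlast : (∑ x : Fin h₂, (∏ j, α j ^ E₂ x j) •
        ∑ y : Fin h₁, (∏ j, α j ^ E₁ y j) • (G₁ y * G₂ x))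
        = ∑ y : Fin h₁, ∑ x : Fin h₂,
            (∏ j, α j ^ (E₁ y j + E₂ x j)) • (G₁ y * G₂ x) := by
      simp only [Finset.smul_sum, smul_smul, ← Finset.prod_mul_distrib, ← pow_add]
      rw [Finset.sum_comm]
      exact Finset.sum_congr rfl fun y _ => Finset.sum_congr rfl fun x _ => by
        congr 1
        exact Finset.prod_congr rfl fun j _ => by rw [add_comm]
    rw [hlast]
    abel
  constructor
  · rintro ⟨α, hα, rfl⟩
    exact ⟨α, hα, key α⟩
  · rintro ⟨α, hα, rfl⟩
    exact ⟨α, hα, (key α).symm⟩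
end

section
/- The quadratic map of two polynomial zonotopes with h₁ and h₂ generators respectively (with common identifier vector) yields a polynomial zonotope with O(h₁·h₂) generators; precisely, at most h₁ + h₂ + h₁·h₂ generators. -/
open Matrix
open scoped BigOperators

/-- A polynomial zonotope in ℝⁿ with h generators. -/
def PolyZono {n p h : ℕ} (c : Fin n → ℝ) (G : Fin h → Fin n → ℝ)
    (E : Fin h → Fin p → ℕ) : Set (Fin n → ℝ) :=
  { x | ∃ α : Fin p → ℝ, (∀ k, α k ∈ Set.Icc (-1:ℝ) 1) ∧
      x = c + ∑ i, (∏ k, α k ^ E i k) • G i }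

private lemma dot_sum {n : ℕ} {ι : Type*} (s : Finset ι) (x : Fin n → ℝ)
    (f : ι → Fin n → ℝ) : x ⬝ᵥ (∑ j ∈ s, f j) = ∑ j ∈ s, x ⬝ᵥ f j := by
  simp only [dotProduct, Finset.sum_apply, Finset.mul_sum]
  exact Finset.sum_comm

private lemma sum_dot {n : ℕ} {ι : Type*} (s : Finset ι) (x : Fin n → ℝ)
    (f : ι → Fin n → ℝ) : (∑ j ∈ s, f j) ⬝ᵥ x = ∑ j ∈ s, f j ⬝ᵥ x := by
  simp only [dotProduct, Finset.sum_apply, Finset.sum_mul]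
  exact Finset.sum_comm

private lemma bilin_expand {n h₁ h₂ : ℕ} (M : Matrix (Fin n) (Fin n) ℝ)
    (c₁ c₂ : Fin n → ℝ) (G₁ : Fin h₁ → Fin n → ℝ) (G₂ : Fin h₂ → Fin n → ℝ)
    (b : Fin h₁ → ℝ) (g : Fin h₂ → ℝ) :
    (c₁ + ∑ i, b i • G₁ i) ⬝ᵥ M.mulVec (c₂ + ∑ j, g j • G₂ j)
      = c₁ ⬝ᵥ M.mulVec c₂ + ((∑ i, b i * (G₁ i ⬝ᵥ M.mulVec c₂))
        + (∑ j, g j * (c₁ ⬝ᵥ M.mulVec (G₂ j)))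
        + ∑ i, ∑ j, (b i * g j) * (G₁ i ⬝ᵥ M.mulVec (G₂ j))) := by
  have hv : M.mulVec (c₂ + ∑ j, g j • G₂ j)
      = M.mulVec c₂ + ∑ j, g j • M.mulVec (G₂ j) := by
    simp only [← Matrix.mulVecLin_apply, map_add, map_sum, LinearMap.map_smul]
  have A : ∀ w : Fin n → ℝ, (∑ i, b i • G₁ i) ⬝ᵥ w = ∑ i, b i * (G₁ i ⬝ᵥ w) := by
    intro w; rw [sum_dot]
    exact Finset.sum_congr rfl fun i _ => by rw [smul_dotProduct, smul_eq_mul]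
  have B : ∀ v : Fin n → ℝ, v ⬝ᵥ (∑ j, g j • M.mulVec (G₂ j))
      = ∑ j, g j * (v ⬝ᵥ M.mulVec (G₂ j)) := by
    intro v; rw [dot_sum]
    exact Finset.sum_congr rfl fun j _ => by rw [dotProduct_smul, smul_eq_mul]
  rw [hv, add_dotProduct, dotProduct_add, dotProduct_add, A, A, B]
  simp only [dotProduct_add, B, mul_add, Finset.mul_sum, Finset.sum_add_distrib,
    ← mul_assoc]
  ring

/-- The quadratic map of two polynomial zonotopes with h₁ and h₂ generators
(common identifier vector) is a polynomial zonotope with at most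
h₁ + h₂ + h₁·h₂ generators. -/
theorem stmt_7 (n nb p h₁ h₂ : ℕ) (Q : Fin nb → Matrix (Fin n) (Fin n) ℝ)
    (c₁ : Fin n → ℝ) (G₁ : Fin h₁ → Fin n → ℝ) (E₁ : Fin h₁ → Fin p → ℕ)
    (c₂ : Fin n → ℝ) (G₂ : Fin h₂ → Fin n → ℝ) (E₂ : Fin h₂ → Fin p → ℕ) :
    ∃ (c : Fin nb → ℝ) (G : Fin (h₁ + h₂ + h₁ * h₂) → Fin nb → ℝ)
      (E : Fin (h₁ + h₂ + h₁ * h₂) → Fin p → ℕ),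
      { y : Fin nb → ℝ | ∃ α : Fin p → ℝ, (∀ k, α k ∈ Set.Icc (-1:ℝ) 1) ∧
          y = fun d => (c₁ + ∑ i, (∏ k, α k ^ E₁ i k) • G₁ i) ⬝ᵥ
              (Q d).mulVec (c₂ + ∑ i, (∏ k, α k ^ E₂ i k) • G₂ i) }
      = PolyZono c G E := by
  let e : ((Fin h₁ ⊕ Fin h₂) ⊕ Fin h₁ × Fin h₂) ≃ Fin (h₁ + h₂ + h₁ * h₂) :=
    (Equiv.sumCongr finSumFinEquiv finProdFinEquiv).trans finSumFinEquiv
  let G0 : ((Fin h₁ ⊕ Fin h₂) ⊕ Fin h₁ × Fin h₂) → Fin nb → ℝ :=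
    Sum.elim (Sum.elim (fun i d => G₁ i ⬝ᵥ (Q d).mulVec c₂)
      (fun j d => c₁ ⬝ᵥ (Q d).mulVec (G₂ j)))
      (fun ij d => G₁ ij.1 ⬝ᵥ (Q d).mulVec (G₂ ij.2))
  let E0 : ((Fin h₁ ⊕ Fin h₂) ⊕ Fin h₁ × Fin h₂) → Fin p → ℕ :=
    Sum.elim (Sum.elim E₁ E₂) (fun ij k => E₁ ij.1 k + E₂ ij.2 k)
  refine ⟨fun d => c₁ ⬝ᵥ (Q d).mulVec c₂, fun t => G0 (e.symm t),
    fun t => E0 (e.symm t), ?_⟩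
  ext y
  simp only [PolyZono, Set.mem_setOf_eq]
  refine exists_congr fun α => and_congr_right fun _ => ?_
  have key : (fun d => (c₁ + ∑ i, (∏ k, α k ^ E₁ i k) • G₁ i) ⬝ᵥ
        (Q d).mulVec (c₂ + ∑ i, (∏ k, α k ^ E₂ i k) • G₂ i))
      = (fun d => c₁ ⬝ᵥ (Q d).mulVec c₂)
        + ∑ t, (∏ k, α k ^ E0 (e.symm t) k) • G0 (e.symm t) := by
    funext d
    have hsum : (∑ t, (∏ k, α k ^ E0 (e.symm t) k) • G0 (e.symm t))
        = ∑ s, (∏ k, α k ^ E0 s k) • G0 s :=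
      Equiv.sum_comp e.symm (fun s => (∏ k, α k ^ E0 s k) • G0 s)
    simp only [Pi.add_apply, Finset.sum_apply, hsum]
    rw [Fintype.sum_sum_type, Fintype.sum_sum_type, Fintype.sum_prod_type]
    simp only [E0, G0, Sum.elim_inl, Sum.elim_inr, Pi.smul_apply, smul_eq_mul]
    have hprod : ∀ (i : Fin h₁) (j : Fin h₂),
        (∏ k, α k ^ (E₁ i k + E₂ j k))
          = (∏ k, α k ^ E₁ i k) * ∏ k, α k ^ E₂ j k := by
      intro i j
      rw [← Finset.prod_mul_distrib]
      exact Finset.prod_congr rfl fun k _ => pow_add _ _ _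
    rw [bilin_expand]
    simp only [hprod]
  rw [key]
end
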